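/- Let ϖ := p^{−1/(p−1)} ∈ ℝ_{>0} and let r be a real number with 0 < r < ϖ/p. Then every element u ∈ A with ‖u − 1‖ ≤ r has a p-th root in A^{××} := {v ∈ A : ‖v − 1‖ < 1}, i.e. there exists v ∈ A with ‖v − 1‖ < 1 and v^p = u. -/
import Mathlib


/-- Let `K` be a field complete with respect to a nonarchimedean absolute
value with `‖p‖ = 1/p`, and let `A` be a commutative unital `K`-Banach algebra with
nonarchimedean norm. Let `ϖ := p^{−1/(p−1)}` and let `0 < r < ϖ/p`. Then every `u ∈ A` with
`‖u − 1‖ ≤ r` has a `p`-th root in `A^{××} = {v : ‖v − 1‖ < 1}`. -/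
theorem pth_root_of_small_unit
    {p : ℕ} (hp : p.Prime)
    {K : Type*} [NormedField K] [CompleteSpace K]
    (hpK : ‖(p : K)‖ = (p : ℝ)⁻¹)
    (hnaK : ∀ x y : K, ‖x + y‖ ≤ max ‖x‖ ‖y‖)
    {A : Type*} [NormedCommRing A] [NormOneClass A] [CompleteSpace A] [NormedAlgebra K A]
    (hnaA : ∀ x y : A, ‖x + y‖ ≤ max ‖x‖ ‖y‖)
    (hsmul : ∀ (l : K) (x : A), ‖l • x‖ = ‖l‖ * ‖x‖)
    (r : ℝ) (hr0 : 0 < r)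
    (hr : r < (p : ℝ) ^ (-(1 : ℝ) / ((p : ℝ) - 1)) / (p : ℝ))
    (u : A) (hu : ‖u - 1‖ ≤ r) :
    ∃ v : A, ‖v - 1‖ < 1 ∧ v ^ p = u := by
  haveI instK : IsUltrametricDist K :=
    IsUltrametricDist.isUltrametricDist_of_isNonarchimedean_norm hnaK
  haveI instA : IsUltrametricDist A :=
    IsUltrametricDist.isUltrametricDist_of_isNonarchimedean_norm hnaA
  have hp2 : 2 ≤ p := hp.two_le
  have hp1 : (1:ℝ) < p := by exact_mod_cast hp.one_lt
  have hp0 : (0:ℝ) < p := lt_trans one_pos hp1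
  set ϖ : ℝ := (p : ℝ) ^ (-(1 : ℝ) / ((p : ℝ) - 1)) with hϖ
  set s : ℝ := p * r with hs
  have hs0 : 0 < s := mul_pos hp0 hr0
  have hsϖ : s < ϖ := by
    rw [hs, mul_comm]
    exact (lt_div_iff₀ hp0).mp hr
  have hϖ1 : ϖ < 1 := by
    apply Real.rpow_lt_one_of_one_lt_of_neg hp1
    apply div_neg_of_neg_of_pos (by norm_num) (by linarith)
  have hs1 : s < 1 := hsϖ.trans hϖ1
  have hϖpow : ϖ ^ (p - 1) = (p:ℝ)⁻¹ := by
    rw [hϖ, ← Real.rpow_natCast ((p:ℝ) ^ (-(1 : ℝ) / ((p : ℝ) - 1))) (p-1),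
      ← Real.rpow_mul (le_of_lt hp0)]
    have hcast : ((p - 1 : ℕ) : ℝ) = (p:ℝ) - 1 := by
      have : (1:ℕ) ≤ p := by omega
      push_cast [Nat.cast_sub this]
      ring
    rw [hcast, div_mul_cancel₀ _ (by linarith), Real.rpow_neg_one]
  have hps : (p:ℝ) * s ^ (p-1) < 1 := by
    have h1 : s ^ (p-1) < ϖ ^ (p-1) := pow_lt_pow_left₀ hsϖ hs0.le (by omega)
    have h2 : (p:ℝ) * s ^ (p-1) < (p:ℝ) * ϖ ^ (p-1) :=
      (mul_lt_mul_iff_right₀ hp0).mpr h1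
    rw [hϖpow, mul_inv_cancel₀ (ne_of_gt hp0)] at h2
    exact h2
  set c : ℝ := max s ((p:ℝ) * s ^ (p-1)) with hcdef
  have hc0 : 0 ≤ c := le_max_of_le_left hs0.le
  have hc1 : c < 1 := max_lt hs1 hps
  have hMp : s ^ (p-1) ≤ (p:ℝ)⁻¹ * c := by
    rw [inv_mul_eq_div, le_div_iff₀ hp0, mul_comm]
    exact le_max_right _ _
  have hMs : s ≤ c := le_max_left _ _
  -- norm of natural multiples
  have hnormcast : ∀ (n : ℕ) (y : A), ‖y * (n:A)‖ = ‖(n:K)‖ * ‖y‖ := by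
    intro n y
    rw [mul_comm, ← nsmul_eq_mul, ← Nat.cast_smul_eq_nsmul K, hsmul]
  set g : A → A := fun w => ∑ k ∈ Finset.Ico 2 (p+1), w ^ k * (p.choose k : A) with hg
  -- Lipschitz estimate for g on the closed ball of radius s
  have hgLip : ∀ w₁ w₂ : A, ‖w₁‖ ≤ s → ‖w₂‖ ≤ s →
      ‖g w₁ - g w₂‖ ≤ (p:ℝ)⁻¹ * c * ‖w₁ - w₂‖ := by
    intro w₁ w₂ h1 h2
    have hdiff : g w₁ - g w₂ = ∑ k ∈ Finset.Ico 2 (p+1),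
        (w₁ ^ k - w₂ ^ k) * (p.choose k : A) := by
      rw [hg, ← Finset.sum_sub_distrib]
      exact Finset.sum_congr rfl fun k _ => by ring
    rw [hdiff]
    apply IsUltrametricDist.norm_sum_le_of_forall_le_of_nonneg (by positivity)
    intro k hk
    simp only [Finset.mem_Ico] at hk
    have hk2 : 2 ≤ k := hk.1
    have hkp : k ≤ p := by omega
    have hpowdiff : ‖w₁ ^ k - w₂ ^ k‖ ≤ s ^ (k-1) * ‖w₁ - w₂‖ := by
      rw [← geom_sum₂_mul w₁ w₂ k]
      refine le_trans (norm_mul_le _ _) (mul_le_mul_of_nonneg_right ?_ (norm_nonneg _))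
      apply IsUltrametricDist.norm_sum_le_of_forall_le_of_nonneg (by positivity)
      intro i hi
      simp only [Finset.mem_range] at hi
      calc ‖w₁ ^ i * w₂ ^ (k - 1 - i)‖ ≤ ‖w₁^i‖ * ‖w₂^(k-1-i)‖ := norm_mul_le _ _
        _ ≤ s ^ i * s ^ (k-1-i) := by
            refine mul_le_mul (le_trans (norm_pow_le _ _)
              (pow_le_pow_left₀ (norm_nonneg _) h1 _))
              (le_trans (norm_pow_le _ _) (pow_le_pow_left₀ (norm_nonneg _) h2 _))
              (norm_nonneg _) (by positivity)
        _ = s ^ (k-1) := by rw [← pow_add]; congr 1; omega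
    rw [hnormcast]
    rcases eq_or_lt_of_le hkp with hkp' | hkp'
    · -- k = p : the binomial coefficient is 1
      subst hkp'
      rw [Nat.choose_self, Nat.cast_one, norm_one, one_mul]
      exact le_trans hpowdiff (mul_le_mul_of_nonneg_right hMp (norm_nonneg _))
    · -- 2 ≤ k < p : the binomial coefficient is divisible by p
      obtain ⟨m, hm⟩ := (Nat.Prime.dvd_choose_self hp (by omega) hkp')
      have hCnorm : ‖((p.choose k : ℕ) : K)‖ ≤ (p:ℝ)⁻¹ := by
        rw [hm]
        push_cast
        rw [norm_mul, hpK]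
        calc (p:ℝ)⁻¹ * ‖((m:ℕ) : K)‖ ≤ (p:ℝ)⁻¹ * 1 :=
              mul_le_mul_of_nonneg_left (IsUltrametricDist.norm_natCast_le_one K m)
                (by positivity)
          _ = (p:ℝ)⁻¹ := mul_one _
      have hsk : s ^ (k-1) ≤ s := by
        calc s ^ (k-1) ≤ s ^ 1 := pow_le_pow_of_le_one hs0.le hs1.le (by omega)
          _ = s := pow_one s
      calc ‖((p.choose k : ℕ) : K)‖ * ‖w₁ ^ k - w₂ ^ k‖
          ≤ (p:ℝ)⁻¹ * (s ^ (k-1) * ‖w₁ - w₂‖) :=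
            mul_le_mul hCnorm hpowdiff (norm_nonneg _) (by positivity)
        _ ≤ (p:ℝ)⁻¹ * (c * ‖w₁ - w₂‖) := by
            refine mul_le_mul_of_nonneg_left ?_ (by positivity)
            exact mul_le_mul_of_nonneg_right (hsk.trans hMs) (norm_nonneg _)
        _ = (p:ℝ)⁻¹ * c * ‖w₁ - w₂‖ := by ring
  have hg0 : g 0 = 0 := by
    rw [hg]
    refine Finset.sum_eq_zero fun k hk => ?_
    simp only [Finset.mem_Ico] at hk
    rw [zero_pow (by omega), zero_mul]
  have hpK0 : (p:K) ≠ 0 := by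
    intro h
    rw [h, norm_zero] at hpK
    exact absurd hpK.symm (by positivity)
  set T : A → A := fun w => (p:K)⁻¹ • ((u - 1) - g w) with hT
  have hTnorm : ∀ y : A, ‖(p:K)⁻¹ • y‖ = p * ‖y‖ := by
    intro y
    rw [hsmul, norm_inv, hpK, inv_inv]
  -- T maps the closed ball of radius s into itself
  have hgw_bound : ∀ w : A, ‖w‖ ≤ s → ‖g w‖ ≤ (p:ℝ)⁻¹ * c * s := by
    intro w hw
    calc ‖g w‖ = ‖g w - g 0‖ := by rw [hg0, sub_zero]
      _ ≤ (p:ℝ)⁻¹ * c * ‖w - 0‖ := hgLip w 0 hw (by simpa using hs0.le)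
      _ ≤ (p:ℝ)⁻¹ * c * s := by
          rw [sub_zero]
          exact mul_le_mul_of_nonneg_left hw (by positivity)
  have hmaps : Set.MapsTo T (Metric.closedBall (0:A) s) (Metric.closedBall (0:A) s) := by
    intro w hw
    rw [Metric.mem_closedBall, dist_zero_right] at hw ⊢
    rw [hT]
    simp only
    rw [hTnorm]
    have hsub : ‖(u - 1) - g w‖ ≤ max r ((p:ℝ)⁻¹ * c * s) := by
      refine le_trans ?_ (max_le_max hu (hgw_bound w hw))
      have := hnaA (u - 1) (-(g w))
      simpa [sub_eq_add_neg] using this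
    calc (p:ℝ) * ‖(u - 1) - g w‖ ≤ (p:ℝ) * max r ((p:ℝ)⁻¹ * c * s) :=
          mul_le_mul_of_nonneg_left hsub hp0.le
      _ = max ((p:ℝ) * r) ((p:ℝ) * ((p:ℝ)⁻¹ * c * s)) := by
          rw [mul_max_of_nonneg _ _ hp0.le]
      _ = max s (c * s) := by
          congr 1
          field_simp
      _ ≤ s := by
          apply max_le le_rfl
          calc c * s ≤ 1 * s := mul_le_mul_of_nonneg_right hc1.le hs0.le
            _ = s := one_mul s
  -- T is a contraction on the ball
  set Kc : NNReal := ⟨c, hc0⟩ with hKc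
  have hsc : IsComplete (Metric.closedBall (0:A) s) :=
    Metric.isClosed_closedBall.isComplete
  have hcontr : ContractingWith Kc (hmaps.restrict T _ _) := by
    constructor
    · rw [← NNReal.coe_lt_one]
      exact hc1
    · apply LipschitzWith.of_dist_le_mul
      rintro ⟨w₁, hw₁⟩ ⟨w₂, hw₂⟩
      rw [Metric.mem_closedBall, dist_zero_right] at hw₁ hw₂
      rw [Subtype.dist_eq, Subtype.dist_eq]
      simp only [Set.MapsTo.val_restrict_apply]
      rw [dist_eq_norm, dist_eq_norm]
      have hTsub : T w₁ - T w₂ = (p:K)⁻¹ • (g w₂ - g w₁) := by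
        rw [hT]
        simp only
        rw [← smul_sub]
        congr 1
        ring
      rw [hTsub, hTnorm]
      calc (p:ℝ) * ‖g w₂ - g w₁‖ ≤ (p:ℝ) * ((p:ℝ)⁻¹ * c * ‖w₂ - w₁‖) :=
            mul_le_mul_of_nonneg_left (hgLip w₂ w₁ hw₂ hw₁) hp0.le
        _ = c * ‖w₂ - w₁‖ := by field_simp
        _ = (Kc : ℝ) * ‖w₁ - w₂‖ := by rw [norm_sub_rev]; rfl
  -- extract the fixed point
  set w : A := ContractingWith.efixedPoint' T hsc hmaps hcontr 0
    (Metric.mem_closedBall_self hs0.le) (edist_ne_top _ _) with hw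
  have hwmem : w ∈ Metric.closedBall (0:A) s :=
    ContractingWith.efixedPoint_mem' hsc hmaps hcontr _ _
  have hwfix : T w = w :=
    ContractingWith.efixedPoint_isFixedPt' hsc hmaps hcontr _ _
  have hwnorm : ‖w‖ ≤ s := by
    rwa [Metric.mem_closedBall, dist_zero_right] at hwmem
  -- the fixed point equation
  have heq : (u - 1) - g w = (p:K) • w := by
    have h1 : (p:K) • ((p:K)⁻¹ • ((u - 1) - g w)) = (p:K) • w := by
      rw [hT] at hwfix
      exact congrArg ((p:K) • ·) hwfix
    rwa [smul_inv_smul₀ hpK0] at h1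
  -- the binomial identity
  have hbinom : (1 + w)^p = 1 + p • w + g w := by
    have hsplit : (∑ k ∈ Finset.Ico 0 2, w ^ k * (p.choose k : A)) +
        ∑ k ∈ Finset.Ico 2 (p+1), w ^ k * (p.choose k : A) =
        ∑ k ∈ Finset.Ico 0 (p+1), w ^ k * (p.choose k : A) :=
      Finset.sum_Ico_consecutive _ (by omega) (by omega)
    have hlow : (∑ k ∈ Finset.Ico 0 2, w ^ k * (p.choose k : A)) = 1 + p • w := by
      rw [← Finset.range_eq_Ico, Finset.sum_range_succ, Finset.sum_range_one]
      simp [nsmul_eq_mul, mul_comm]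
    calc (1 + w)^p = (w + 1)^p := by ring
      _ = ∑ k ∈ Finset.range (p+1), w ^ k * (p.choose k : A) := by
          rw [add_pow]
          exact Finset.sum_congr rfl fun k _ => by rw [one_pow, mul_one]
      _ = 1 + p • w + g w := by
          rw [Finset.range_eq_Ico, ← hsplit, hlow, hg]
  refine ⟨1 + w, ?_, ?_⟩
  · rw [add_sub_cancel_left]
    exact lt_of_le_of_lt hwnorm (hs1)
  · rw [hbinom, ← Nat.cast_smul_eq_nsmul K, ← heq]
    ring
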